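/- Case 1 correctness of Algorithm 1: suppose P[i] starts a MEM, i ≤ m - L + 1, and b = LCS(P[1..i+L-1], T) ≥ L, where LCS(Q, T) denotes the maximum length of a suffix of Q occurring as a substring of T. Then the MEM starting at P[i] has length f = LCP(P[i..m], T) ≥ L, i.e., P[i..i+f-1] is a MEM of length at least L. -/

import Mathlib

open List

variable {α : Type*}

/-- `pseg P i j` is the substring `P[i..j]` (1-based, inclusive). -/
def pseg (P : List α) (i j : ℕ) : List α := (P.take j).drop (i - 1)

/-- `P[i..j]` is a MEM (maximal exact match) of `P` with respect to `T`. -/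
def IsMEM (P T : List α) (i j : ℕ) : Prop :=
  1 ≤ i ∧ i ≤ j ∧ j ≤ P.length ∧
  pseg P i j <:+: T ∧
  (i = 1 ∨ ¬ pseg P (i - 1) j <:+: T) ∧
  (j = P.length ∨ ¬ pseg P i (j + 1) <:+: T)

/-- The maximum length of a prefix of `Q` occurring as a substring of `T`. -/
noncomputable def lcpLen (Q T : List α) : ℕ :=
  sSup {l | l ≤ Q.length ∧ Q.take l <:+: T}

/-- The maximum length of a suffix of `Q` occurring as a substring of `T`. -/
noncomputable def lcsLen (Q T : List α) : ℕ :=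
  sSup {l | l ≤ Q.length ∧ Q.drop (Q.length - l) <:+: T}

/-- The length of the longest common suffix of `Q` and `R`. -/
noncomputable def lcsufLen (Q R : List α) : ℕ :=
  sSup {l | l ≤ Q.length ∧ l ≤ R.length ∧ Q.drop (Q.length - l) = R.drop (R.length - l)}

lemma pseg_eq_take_drop (P : List α) (i j : ℕ) :
    pseg P i j = (P.drop (i - 1)).take (j - (i - 1)) := by
  simp [pseg, List.drop_take]

/-- Case 1 correctness of Algorithm 1. -/
theorem case1_correct (P T : List α) (L i : ℕ)
    (hL : 1 ≤ L) (hi1 : 1 ≤ i)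
    (hocc : ∀ c ∈ P, [c] <:+: T)
    (hstart : ∃ j, IsMEM P T i j)
    (hiL : i + L ≤ P.length + 1)
    (hb : L ≤ lcsLen (P.take (i + L - 1)) T) :
    L ≤ lcpLen (P.drop (i - 1)) T ∧
    IsMEM P T i (i + lcpLen (P.drop (i - 1)) T - 1) := by
  obtain ⟨j, hM⟩ := hstart
  obtain ⟨_, hij, hjP, hinf, hleft, hright⟩ := hM
  set Q := P.drop (i - 1) with hQ
  have hQlen : Q.length = P.length - (i - 1) := by simp [hQ]
  -- Step A: pseg P i (i + L - 1) occurs in T.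
  have hRlen : (P.take (i + L - 1)).length = i + L - 1 := by
    simp; omega
  have hsegL : pseg P i (i + L - 1) <:+: T := by
    set R := P.take (i + L - 1) with hR
    set S := {l | l ≤ R.length ∧ R.drop (R.length - l) <:+: T} with hS
    have hbdd : BddAbove S := ⟨R.length, fun l hl => hl.1⟩
    have hne : S.Nonempty := ⟨0, by simp [hS]⟩
    have hmem : sSup S ∈ S := Nat.sSup_mem hne hbdd
    obtain ⟨hble, hbinf⟩ := hmem
    have hLb : L ≤ sSup S := hb
    have : R.drop (R.length - L) <:+: T := by
      have heq : R.drop (R.length - L)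
          = (R.drop (R.length - sSup S)).drop ((sSup S) - L) := by
        rw [List.drop_drop]
        congr 1
        omega
      rw [heq]
      exact (List.drop_suffix _ _).isInfix.trans hbinf
    have heq2 : R.length - L = i - 1 := by rw [hRlen]; omega
    rw [heq2] at this
    simpa [pseg, hR] using this
  -- Step B: j ≥ i + L - 1.
  have hjL : i + L - 1 ≤ j := by
    by_contra hlt
    push_neg at hlt
    have hjP' : j < P.length := by omega
    have hj1 : j + 1 ≤ i + L - 1 := by omega
    have hsegL' : Q.take (i + L - 1 - (i - 1)) <:+: T := by
      rwa [pseg_eq_take_drop] at hsegL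
    have : pseg P i (j + 1) <:+: T := by
      rw [pseg_eq_take_drop]
      exact (IsPrefix.isInfix
        (List.take_prefix_take_left (show j + 1 - (i-1) ≤ i + L - 1 - (i-1) by omega))).trans hsegL'
    rcases hright with h | h
    · omega
    · exact h this
  -- Step C: lcpLen Q T = j - (i - 1).
  set Sf := {l | l ≤ Q.length ∧ Q.take l <:+: T} with hSf
  have hbddf : BddAbove Sf := ⟨Q.length, fun l hl => hl.1⟩
  have hmemf : j - (i - 1) ∈ Sf := by
    constructor
    · omega
    · rwa [pseg_eq_take_drop] at hinf
  have hub : ∀ l ∈ Sf, l ≤ j - (i - 1) := by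
    intro l hl
    rcases hright with h | h
    · have := hl.1; omega
    · by_contra hlt
      push_neg at hlt
      apply h
      rw [pseg_eq_take_drop]
      refine (IsPrefix.isInfix ?_).trans hl.2
      exact List.take_prefix_take_left (by omega)
  have hf : lcpLen Q T = j - (i - 1) :=
    le_antisymm (csSup_le ⟨_, hmemf⟩ hub) (le_csSup hbddf hmemf)
  have hji : i + lcpLen Q T - 1 = j := by rw [hf]; omega
  rw [hji]
  refine ⟨by omega, hi1, hij, hjP, hinf, hleft, hright⟩
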